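/- arXiv:1908.08238 — 3 statements merged into one kernel-verified Lean document; each statement's English description precedes it below -/
import Mathlib

section
/- Let k ≥ 2 and let p be a real polynomial of degree at most k on an interval I_n = [t_{n-1}, t_n]. Let I^GL p denote the Lagrange interpolant of p of degree at most k-1 at the k Gauss–Lobatto points of I_n (the endpoints and the k-2 roots of the Jacobi polynomial of degree k-2 for the weight (1-t)(1+t), transformed to I_n). Then the derivatives agree at every Gauss point: (d/dt) p(t^G_{n,μ}) = (d/dt)(I^GL p)(t^G_{n,μ}) for all Gauss points t^G_{n,μ}, μ = 1,…,k-1, where the Gauss points are the roots of the Legendre polynomial of degree k-1 transformed to I_n. -/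
open Polynomial

private lemma zero_of_coeff_zero_of_roots {n : ℕ} {ι : Type*} [Fintype ι] (D : Polynomial ℝ)
    (hdeg : D.natDegree ≤ n) (hc : D.coeff n = 0) (f : ι → ℝ) (hf : Function.Injective f)
    (hcard : n ≤ Fintype.card ι) (heval : ∀ i, D.eval (f i) = 0) : D = 0 := by
  rcases lt_or_eq_of_le hdeg with h | h
  · exact Polynomial.eq_zero_of_natDegree_lt_card_of_eval_eq_zero D hf heval (h.trans_le hcard)
  · exact Polynomial.leadingCoeff_eq_zero.mp (by rw [Polynomial.leadingCoeff, h]; exact hc)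

private lemma poly_integral (P : Polynomial ℝ) (a b : ℝ) :
    ∫ x in a..b, (derivative P).eval x = P.eval b - P.eval a :=
  intervalIntegral.integral_eq_sub_of_hasDerivAt (fun x _ => P.hasDerivAt x)
    ((Polynomial.continuous _).intervalIntegrable _ _)

/-- Derivatives of a polynomial `p` of degree ≤ k and of its Gauss--Lobatto
interpolant `q` (degree ≤ k-1, interpolating `p` at the k Gauss--Lobatto points
of `[a,b]`) agree at every Gauss point of `[a,b]`. The interior Gauss--Lobatto
points are the affine images of the roots of the Jacobi polynomial of degree `k-2`
for the weight `(1-t)(1+t)`; the Gauss points are the affine images of the roots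
of the Legendre polynomial of degree `k-1`. -/
theorem deriv_gaussLobatto_interpolant_eq_at_gauss_points
    (k : ℕ) (hk : 2 ≤ k) (a b : ℝ) (hab : a < b)
    (T : ℝ → ℝ) (hT : ∀ x, T x = (a + b) / 2 + (b - a) / 2 * x)
    -- Jacobi polynomial of degree k-2 for the weight (1-t)(1+t) and its roots
    (J : Polynomial ℝ) (hJdeg : J.natDegree = k - 2) (hJne : J ≠ 0)
    (hJorth : ∀ r : Polynomial ℝ, r.natDegree < k - 2 →
      ∫ t in (-1:ℝ)..1, (1 - t) * (1 + t) * J.eval t * r.eval t = 0)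
    (s : Fin (k - 2) → ℝ) (hs : Function.Injective s)
    (hsmem : ∀ i, s i ∈ Set.Ioo (-1:ℝ) 1) (hroot : ∀ i, J.eval (s i) = 0)
    -- Legendre polynomial of degree k-1 and its roots (the Gauss points)
    (L : Polynomial ℝ) (hLdeg : L.natDegree = k - 1) (hLne : L ≠ 0)
    (hLorth : ∀ r : Polynomial ℝ, r.natDegree < k - 1 →
      ∫ t in (-1:ℝ)..1, L.eval t * r.eval t = 0)
    (g : Fin (k - 1) → ℝ) (hg : Function.Injective g)
    (hgmem : ∀ i, g i ∈ Set.Ioo (-1:ℝ) 1) (hgroot : ∀ i, L.eval (g i) = 0)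
    -- p and its Gauss--Lobatto interpolant q
    (p q : Polynomial ℝ) (hp : p.natDegree ≤ k) (hq : q.natDegree ≤ k - 1)
    (hend1 : q.eval a = p.eval a) (hend2 : q.eval b = p.eval b)
    (hint : ∀ i, q.eval (T (s i)) = p.eval (T (s i))) :
    ∀ i, (derivative q).eval (T (g i)) = (derivative p).eval (T (g i)) := by
  intro i
  set e : Polynomial ℝ := p - q with he
  set τ : Polynomial ℝ := C ((a + b) / 2) + C ((b - a) / 2) * X with hτ
  have hτeval : ∀ x : ℝ, τ.eval x = T x := by
    intro x; simp [hτ, hT x]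
  have hτdeg : τ.natDegree ≤ 1 := by
    refine (natDegree_add_le _ _).trans (max_le (by simp) ?_)
    exact (natDegree_C_mul_le _ _).trans (by simp)
  set E : Polynomial ℝ := e.comp τ with hE
  have hEeval : ∀ x : ℝ, E.eval x = e.eval (T x) := by
    intro x; simp [hE, eval_comp, hτeval]
  have hEdeg : E.natDegree ≤ k := by
    calc E.natDegree ≤ e.natDegree * τ.natDegree := natDegree_comp_le
      _ ≤ k * 1 := Nat.mul_le_mul
        ((natDegree_sub_le p q).trans (max_le hp (hq.trans (Nat.sub_le k 1)))) hτdeg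
      _ = k := mul_one k
  have hT1 : T 1 = b := by rw [hT]; ring
  have hTm1 : T (-1) = a := by rw [hT]; ring
  have hE1 : E.eval 1 = 0 := by rw [hEeval, hT1]; simp [he, hend2]
  have hEm1 : E.eval (-1) = 0 := by rw [hEeval, hTm1]; simp [he, hend1]
  have hEs : ∀ j, E.eval (s j) = 0 := by
    intro j; rw [hEeval]; simp [he, hint j]
  -- factor J through its roots
  set Jh : Polynomial ℝ := ∏ j : Fin (k - 2), (X - C (s j)) with hJh
  have hJhmonic : Jh.Monic := monic_prod_of_monic _ _ fun j _ => monic_X_sub_C _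
  have hJhdeg : Jh.natDegree = k - 2 := by
    rw [hJh, natDegree_prod _ _ fun j _ => X_sub_C_ne_zero _]
    simp
  have hJhs : ∀ j, Jh.eval (s j) = 0 := by
    intro j
    rw [hJh, eval_prod]
    exact Finset.prod_eq_zero (Finset.mem_univ j) (by simp)
  set lJ := J.leadingCoeff with hlJ
  have hlJne : lJ ≠ 0 := leadingCoeff_ne_zero.mpr hJne
  have hJfact : J = C lJ * Jh := by
    have h0 : J - C lJ * Jh = 0 := by
      refine zero_of_coeff_zero_of_roots (n := k - 2) _ ?_ ?_ s hs (by simp) ?_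
      · exact (natDegree_sub_le _ _).trans (max_le hJdeg.le
          ((natDegree_C_mul_le _ _).trans hJhdeg.le))
      · have h1 : J.coeff (k - 2) = lJ := by
          rw [hlJ, Polynomial.leadingCoeff, hJdeg]
        have h2 : Jh.coeff (k - 2) = 1 := by
          rw [← hJhdeg]; exact hJhmonic.coeff_natDegree
        simp [coeff_sub, coeff_C_mul, h1, h2]
      · intro j; simp [eval_sub, hroot j, hJhs j]
    exact sub_eq_zero.mp h0
  -- factor E through its k roots
  set G : Polynomial ℝ := (X - C (1:ℝ)) * (X - C (-1)) * Jh with hG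
  have hGmonic : G.Monic := ((monic_X_sub_C _).mul (monic_X_sub_C _)).mul hJhmonic
  have hGdeg : G.natDegree = k := by
    rw [hG, ((monic_X_sub_C (1:ℝ)).mul (monic_X_sub_C (-1))).natDegree_mul hJhmonic,
      (monic_X_sub_C (1:ℝ)).natDegree_mul (monic_X_sub_C (-1))]
    simp only [natDegree_X_sub_C, hJhdeg]
    omega
  set c := E.coeff k with hc
  have hEfact : E = C c * G := by
    have h0 : E - C c * G = 0 := by
      set f : Fin (k - 2) ⊕ Bool → ℝ := Sum.elim s (fun b => if b then 1 else -1) with hf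
      have hsne : ∀ (j : Fin (k - 2)) (w : Bool), s j ≠ (if w then 1 else (-1:ℝ)) := by
        intro j w
        rcases hsmem j with ⟨h1, h2⟩
        cases w <;> simp <;> linarith
      have hfinj : Function.Injective f := by
        rintro (x | x) (y | y) hxy <;>
          simp only [hf, Sum.elim_inl, Sum.elim_inr] at hxy
        · exact congrArg Sum.inl (hs hxy)
        · exact absurd hxy (hsne x y)
        · exact absurd hxy.symm (hsne y x)
        · cases x <;> cases y
          · rfl
          · norm_num at hxy
          · norm_num at hxy
          · rfl
      refine zero_of_coeff_zero_of_roots (n := k) _ ?_ ?_ f hfinj ?_ ?_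
      · exact (natDegree_sub_le _ _).trans
          (max_le hEdeg ((natDegree_C_mul_le _ _).trans hGdeg.le))
      · have h2 : G.coeff k = 1 := by rw [← hGdeg]; exact hGmonic.coeff_natDegree
        simp [coeff_sub, coeff_C_mul, h2, hc]
      · simp only [Fintype.card_sum, Fintype.card_fin, Fintype.card_bool]
        omega
      · rintro (j | j)
        · have : G.eval (s j) = 0 := by simp [hG, hJhs j]
          simp [hf, hEs j, this]
        · rcases j with _ | _
          · have : G.eval (-1) = 0 := by simp [hG]
            simp [hf, hEm1, this]
          · have : G.eval 1 = 0 := by simp [hG]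
            simp [hf, hE1, this]
    exact sub_eq_zero.mp h0
  -- orthogonality of E'
  have hEortho : ∀ r : Polynomial ℝ, r.natDegree < k - 1 →
      ∫ x in (-1:ℝ)..1, (derivative E).eval x * r.eval x = 0 := by
    intro r hr
    have key : Set.EqOn (fun x => (derivative E).eval x * r.eval x)
        (fun x => (derivative (E * r)).eval x - E.eval x * (derivative r).eval x)
        (Set.uIcc (-1:ℝ) 1) := by
      intro x _
      simp only [derivative_mul, eval_add, eval_mul]
      ring
    rw [intervalIntegral.integral_congr key,
      intervalIntegral.integral_sub (g := fun x => E.eval x * (derivative r).eval x)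
        ((Polynomial.continuous _).intervalIntegrable _ _)
        (((Polynomial.continuous E).mul (Polynomial.continuous _)).intervalIntegrable _ _),
      poly_integral]
    have h2 : ∫ x in (-1:ℝ)..1, E.eval x * (derivative r).eval x = 0 := by
      by_cases hr0 : derivative r = 0
      · simp [hr0]
      · have hrne : r.natDegree ≠ 0 := by
          intro h
          exact hr0 (by rw [eq_C_of_natDegree_eq_zero h]; simp)
        have hrd : (derivative r).natDegree < k - 2 := by
          have h1 := natDegree_derivative_lt hrne
          omega
        have horth := hJorth (derivative r) hrd
        have hpt : Set.EqOn (fun x => E.eval x * (derivative r).eval x)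
            (fun x => (-(c / lJ)) * ((1 - x) * (1 + x) * J.eval x * (derivative r).eval x))
            (Set.uIcc (-1:ℝ) 1) := by
          intro x _
          have hJx : J.eval x = lJ * Jh.eval x := by rw [hJfact]; simp
          rw [hEfact]
          simp only [hG, eval_mul, eval_sub, eval_X, eval_C, hJx]
          field_simp
          ring
        rw [intervalIntegral.integral_congr hpt, intervalIntegral.integral_const_mul, horth,
          mul_zero]
    rw [h2, eval_mul, eval_mul, hE1, hEm1]
    ring
  -- E' is a multiple of L
  set lL := L.leadingCoeff with hlL
  have hlLne : lL ≠ 0 := leadingCoeff_ne_zero.mpr hLne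
  set lam := (derivative E).coeff (k - 1) / lL with hlam
  set D : Polynomial ℝ := derivative E - C lam * L with hD
  have hDdeg : D.natDegree ≤ k - 1 :=
    (natDegree_sub_le _ _).trans (max_le
      ((natDegree_derivative_le E).trans (Nat.sub_le_sub_right hEdeg 1))
      ((natDegree_C_mul_le _ _).trans hLdeg.le))
  have hDcoeff : D.coeff (k - 1) = 0 := by
    have hLc : L.coeff (k - 1) = lL := by rw [hlL, Polynomial.leadingCoeff, hLdeg]
    simp only [hD, coeff_sub, coeff_C_mul, hLc, hlam]
    field_simp
    ring
  have hDorth : ∀ r : Polynomial ℝ, r.natDegree < k - 1 →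
      ∫ x in (-1:ℝ)..1, D.eval x * r.eval x = 0 := by
    intro r hr
    have key : Set.EqOn (fun x => D.eval x * r.eval x)
        (fun x => (derivative E).eval x * r.eval x - lam * (L.eval x * r.eval x))
        (Set.uIcc (-1:ℝ) 1) := by
      intro x _
      simp only [hD, eval_sub, eval_mul, eval_C]
      ring
    rw [intervalIntegral.integral_congr key,
      intervalIntegral.integral_sub (f := fun x => (derivative E).eval x * r.eval x)
        (g := fun x => lam * (L.eval x * r.eval x))
        (((Polynomial.continuous _).mul (Polynomial.continuous _)).intervalIntegrable _ _)
        ((continuous_const.mul ((Polynomial.continuous _).mul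
          (Polynomial.continuous _))).intervalIntegrable _ _),
      hEortho r hr, intervalIntegral.integral_const_mul, hLorth r hr]
    ring
  have hD0 : D = 0 := by
    by_contra hne
    have hdlt : D.natDegree < k - 1 := by
      rcases lt_or_eq_of_le hDdeg with h | h
      · exact h
      · exact absurd (Polynomial.leadingCoeff_eq_zero.mp
          (by rw [Polynomial.leadingCoeff, h]; exact hDcoeff)) hne
    have hzero := hDorth D hdlt
    have hex : ∃ x ∈ Set.Icc (-1:ℝ) 1, D.eval x ≠ 0 := by
      by_contra hcon
      push_neg at hcon
      exact hne (D.eq_zero_of_infinite_isRoot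
        ((Set.Icc_infinite (show (-1:ℝ) < 1 by norm_num)).mono hcon))
    obtain ⟨x0, hx0, hx0ne⟩ := hex
    have hpos : 0 < ∫ x in (-1:ℝ)..1, D.eval x * D.eval x :=
      intervalIntegral.integral_pos (by norm_num)
        (((Polynomial.continuous D).mul (Polynomial.continuous D)).continuousOn)
        (fun x _ => mul_self_nonneg _) ⟨x0, hx0, mul_self_pos.mpr hx0ne⟩
    linarith
  have hEL : derivative E = C lam * L := sub_eq_zero.mp hD0
  have hEg : (derivative E).eval (g i) = 0 := by
    rw [hEL]; simp [hgroot i]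
  have hder : derivative E = C ((b - a) / 2) * (derivative e).comp τ := by
    rw [hE, derivative_comp]
    congr 1
    simp [hτ]
  have hmul : (b - a) / 2 * (derivative e).eval (T (g i)) = 0 := by
    have h := hEg
    rw [hder] at h
    simpa [eval_mul, eval_comp, hτeval] using h
  have hne2 : (b - a) / 2 ≠ 0 := by
    have : 0 < (b - a) / 2 := by linarith
    exact this.ne'
  have he0 : (derivative e).eval (T (g i)) = 0 :=
    (mul_eq_zero.mp hmul).resolve_left hne2
  have hsub : derivative e = derivative p - derivative q := by rw [he, derivative_sub]
  rw [hsub] at he0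
  simp only [eval_sub] at he0
  linarith
end

section
/- For every polynomial u : I_n → H of degree at most k with values in a Hilbert space H, one has ∫_{I_n} ‖u(t)‖² dt ≤ C (τ_n ‖u(t_{n-1})‖² + τ_n² ∫_{I_n} ‖u'(t)‖² dt), where τ_n = t_n − t_{n-1} and C depends only on k. -/
open MeasureTheory intervalIntegral

theorem aux_cs {f : ℝ → ℝ} (hf : Continuous f) (hfn : ∀ s, 0 ≤ f s) {a t : ℝ} (h : a ≤ t) :
    (∫ s in a..t, f s) ^ 2 ≤ (t - a) * ∫ s in a..t, f s ^ 2 := by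
  have hfin : IsFiniteMeasure (volume.restrict (Set.Ioc a t)) := by
    constructor
    simp [Real.volume_Ioc]
  set μ := volume.restrict (Set.Ioc a t) with hμ
  have hpq : Real.HolderConjugate 2 2 := Real.holderConjugate_iff.mpr ⟨one_lt_two, by norm_num⟩
  obtain ⟨M, hM⟩ : ∃ M, ∀ x ∈ Set.Icc a t, ‖f x‖ ≤ M :=
    (isCompact_Icc).exists_bound_of_continuousOn hf.continuousOn
  have hmem : MemLp f (ENNReal.ofReal 2) μ := by
    refine MemLp.of_bound hf.aestronglyMeasurable M ?_
    filter_upwards [ae_restrict_mem measurableSet_Ioc] with x hx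
    exact hM x (Set.Ioc_subset_Icc_self hx)
  have hmem1 : MemLp (fun _ : ℝ => (1:ℝ)) (ENNReal.ofReal 2) μ := memLp_const 1
  have key := integral_mul_le_Lp_mul_Lq_of_nonneg hpq
    (Filter.Eventually.of_forall hfn)
    (Filter.Eventually.of_forall (fun _ => zero_le_one)) hmem hmem1
  simp only [mul_one, Real.one_rpow, MeasureTheory.integral_const, smul_eq_mul] at key
  have hB : μ.real Set.univ = t - a := by
    rw [Measure.real]
    simp [hμ, Real.volume_Ioc, ENNReal.toReal_ofReal (sub_nonneg.mpr h)]
  have h2 : ∀ x : ℝ, f x ^ (2:ℝ) = f x ^ (2:ℕ) := fun x => by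
    rw [show (2:ℝ) = ((2:ℕ):ℝ) by norm_num, Real.rpow_natCast]
  simp only [h2, hB] at key
  rw [intervalIntegral.integral_of_le h, intervalIntegral.integral_of_le h]
  set I := ∫ x, f x ∂μ with hI
  set A := ∫ x, f x ^ (2:ℕ) ∂μ with hA
  have hI0 : 0 ≤ I := integral_nonneg hfn
  have hA0 : 0 ≤ A := integral_nonneg fun x => sq_nonneg _
  have := pow_le_pow_left₀ hI0 key 2
  calc I ^ 2 ≤ (A ^ (1/(2:ℝ)) * (t - a) ^ (1/(2:ℝ))) ^ 2 := this
    _ = A * (t - a) := by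
        rw [mul_pow, ← Real.rpow_natCast (A ^ (1/(2:ℝ))) 2, ← Real.rpow_natCast ((t-a) ^ (1/(2:ℝ))) 2,
          ← Real.rpow_mul hA0, ← Real.rpow_mul (sub_nonneg.mpr h)]
        norm_num
    _ = (t - a) * A := mul_comm _ _

theorem aux_main {H : Type} [NormedAddCommGroup H] [NormedSpace ℝ H]
    {u v : ℝ → H} {a b : ℝ} (hab : a < b)
    (hcu : Continuous u) (hcv : Continuous v)
    (hftc : ∀ t, a ≤ t → ‖u t - u a‖ ≤ ∫ s in a..t, ‖v s‖) :
    (∫ t in a..b, ‖u t‖ ^ 2) ≤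
      2 * ((b - a) * ‖u a‖ ^ 2 + (b - a) ^ 2 * ∫ t in a..b, ‖v t‖ ^ 2) := by
  set J := ∫ t in a..b, ‖v t‖ ^ 2 with hJ
  have hJ0 : 0 ≤ J :=
    intervalIntegral.integral_nonneg hab.le fun s _ => sq_nonneg _
  have hpt : ∀ t ∈ Set.Icc a b, ‖u t‖ ^ 2 ≤ 2 * ‖u a‖ ^ 2 + 2 * ((b - a) * J) := by
    intro t ht
    obtain ⟨hat, htb⟩ := ht
    set X := ∫ s in a..t, ‖v s‖ with hX
    have hX0 : 0 ≤ X := intervalIntegral.integral_nonneg hat fun s _ => norm_nonneg _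
    have h1 : ‖u t‖ ≤ ‖u a‖ + X := by
      have e : u a + (u t - u a) = u t := by abel
      calc ‖u t‖ = ‖u a + (u t - u a)‖ := by rw [e]
        _ ≤ ‖u a‖ + ‖u t - u a‖ := norm_add_le _ _
        _ ≤ ‖u a‖ + X := by gcongr; exact hftc t hat
    have h2 : X ^ 2 ≤ (t - a) * ∫ s in a..t, ‖v s‖ ^ 2 :=
      aux_cs (hcv.norm) (fun s => norm_nonneg _) hat
    have h3 : (∫ s in a..t, ‖v s‖ ^ 2) ≤ J := by
      apply intervalIntegral.integral_mono_interval le_rfl hat htb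
      · filter_upwards with s using sq_nonneg _
      · exact ((hcv.norm).pow 2).intervalIntegrable a b
    have h4 : X ^ 2 ≤ (b - a) * J :=
      h2.trans (mul_le_mul (by linarith) h3
        (intervalIntegral.integral_nonneg hat fun s _ => sq_nonneg _) (by linarith))
    nlinarith [norm_nonneg (u a), norm_nonneg (u t), sq_nonneg (‖u a‖ - X)]
  have hint1 : IntervalIntegrable (fun t => ‖u t‖ ^ 2) volume a b :=
    ((hcu.norm).pow 2).intervalIntegrable a b
  calc (∫ t in a..b, ‖u t‖ ^ 2)
      ≤ ∫ _t in a..b, (2 * ‖u a‖ ^ 2 + 2 * ((b - a) * J)) :=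
        intervalIntegral.integral_mono_on hab.le hint1 intervalIntegrable_const hpt
    _ = (b - a) * (2 * ‖u a‖ ^ 2 + 2 * ((b - a) * J)) := by
        rw [intervalIntegral.integral_const, smul_eq_mul]
    _ = 2 * ((b - a) * ‖u a‖ ^ 2 + (b - a) ^ 2 * J) := by ring

/-- For every `H`-valued polynomial `u` of degree at most `k` on `I_n = [a,b]`,
`∫_{I_n} ‖u‖² ≤ C (τ_n ‖u(a)‖² + τ_n² ∫_{I_n} ‖u'‖²)` with `C` depending only on `k`. -/
theorem polynomial_L2_bound_by_initial_value_and_derivative (k : ℕ) :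
    ∃ C : ℝ, 0 < C ∧
      ∀ (H : Type) [NormedAddCommGroup H] [InnerProductSpace ℝ H],
        ∀ (a b : ℝ), a < b →
          ∀ (c : Fin (k + 1) → H) (u : ℝ → H),
            (∀ t, u t = ∑ i : Fin (k + 1), t ^ (i : ℕ) • c i) →
            (∫ t in a..b, ‖u t‖ ^ 2) ≤
              C * ((b - a) * ‖u a‖ ^ 2 + (b - a) ^ 2 * ∫ t in a..b, ‖deriv u t‖ ^ 2) := by
  refine ⟨2, two_pos, ?_⟩
  intro H _ _ a b hab c u hu
  set F := Submodule.span ℝ (Set.range c) with hF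
  haveI : FiniteDimensional ℝ F := FiniteDimensional.span_of_finite ℝ (Set.finite_range c)
  let c' : Fin (k + 1) → F := fun i => ⟨c i, Submodule.subset_span ⟨i, rfl⟩⟩
  let U : ℝ → F := fun t => ∑ i : Fin (k + 1), t ^ (i : ℕ) • c' i
  let V : ℝ → F := fun t => ∑ i : Fin (k + 1), ((i : ℕ) * t ^ ((i : ℕ) - 1)) • c' i
  let v : ℝ → H := fun t => (V t : H)
  have hUu : ∀ t, (U t : H) = u t := by
    intro t
    rw [hu]
    simp [U, c']
  have hderU : ∀ t, HasDerivAt U (V t) t := fun t =>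
    HasDerivAt.fun_sum fun i _ => (hasDerivAt_pow (i : ℕ) t).smul_const (c' i)
  have hderu : ∀ t, HasDerivAt u (v t) t := by
    intro t
    have h1 : HasDerivAt (fun s => (U s : H)) (v t) t :=
      F.subtypeL.hasFDerivAt.comp_hasDerivAt t (hderU t)
    exact h1.congr_of_eventuallyEq (Filter.Eventually.of_forall fun s => (hUu s).symm)
  have hderiv_eq : deriv u = v := funext fun t => (hderu t).deriv
  have hcV : Continuous V := by fun_prop
  have hcv : Continuous v := continuous_subtype_val.comp hcV
  have hcu : Continuous u := by
    have : Continuous fun s => (U s : H) := continuous_subtype_val.comp (by fun_prop)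
    exact this.congr hUu
  rw [hderiv_eq]
  apply aux_main hab hcu hcv
  intro t hat
  have hftcF : (∫ s in a..t, V s) = U t - U a :=
    intervalIntegral.integral_eq_sub_of_hasDerivAt (fun x _ => hderU x)
      (hcV.intervalIntegrable a t)
  have h1 : ‖u t - u a‖ = ‖U t - U a‖ := by
    rw [← hUu, ← hUu]
    norm_cast
  rw [h1, ← hftcF]
  exact (intervalIntegral.norm_integral_le_integral_norm hat)
end

section
/- Let B be a Banach space and u ∈ C¹(I_n; B). Let R u ∈ P_k(I_n; B) satisfy R u(t_{n-1}) = I u(t_{n-1}) and (R u)' = I^GL_{k}((I u)') where I u ∈ P_{k+1}(I_n; B) is the Hermite interpolant of u and I^GL_k denotes Lagrange interpolation at the k Gauss–Lobatto points into P_{k-1}(I_n; B). Then R u(t_n) = u(t_n) and (R u)'(t_{n-1}) = u'(t_{n-1}), (R u)'(t_n) = u'(t_n), provided I u matches u and u' at both endpoints. -/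
open Polynomial

/-- Key scalar lemma: a real polynomial of degree at most `k` vanishing at the `k`
Gauss--Lobatto points together with one extra endpoint has zero integral over `[a,b]`. -/
lemma key_integral_zero
    (k : ℕ) (hk : 3 ≤ k) (a b : ℝ) (hab : a < b)
    (T : ℝ → ℝ) (hT : ∀ x, T x = (a + b) / 2 + (b - a) / 2 * x)
    (J : Polynomial ℝ) (hJdeg : J.natDegree = k - 2) (hJne : J ≠ 0)
    (hJorth : ∀ r : Polynomial ℝ, r.natDegree < k - 2 →
      ∫ t in (-1:ℝ)..1, (1 - t) * (1 + t) * J.eval t * r.eval t = 0)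
    (s : Fin (k - 2) → ℝ) (hs : Function.Injective s)
    (hsmem : ∀ i, s i ∈ Set.Ioo (-1:ℝ) 1) (hroot : ∀ i, J.eval (s i) = 0)
    (D : Polynomial ℝ) (hDdeg : D.natDegree ≤ k)
    (hDa : D.eval a = 0) (hDb : D.eval b = 0) (hDs : ∀ i, D.eval (T (s i)) = 0) :
    ∫ t in a..b, D.eval t = 0 := by
  classical
  set h : ℝ := (b - a) / 2 with hh_def
  set m : ℝ := (a + b) / 2 with hm_def
  have hh : 0 < h := by simp [hh_def]; linarith
  have hTx : ∀ x, T x = h * x + m := by intro x; rw [hT]; ring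
  -- the interior Gauss-Lobatto points lie strictly between a and b
  have hTmem : ∀ i, T (s i) ∈ Set.Ioo a b := by
    intro i
    obtain ⟨h1, h2⟩ := hsmem i
    constructor <;> rw [hTx] <;> nlinarith
  have hTinj : Function.Injective (fun i => T (s i)) := by
    intro i j hij
    apply hs
    simp only [hTx] at hij
    have : h * s i = h * s j := by linarith
    exact mul_left_cancel₀ (ne_of_gt hh) this
  -- the leading-coefficient factorization of J
  have hS : ((Finset.univ.image s).val : Multiset ℝ) = J.roots := by
    apply Multiset.eq_of_le_of_card_le
    · rw [Multiset.le_iff_subset (Finset.univ.image s).nodup]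
      intro x hx
      simp only [Finset.mem_val, Finset.mem_image] at hx
      obtain ⟨i, _, rfl⟩ := hx
      exact (mem_roots hJne).2 (hroot i)
    · calc Multiset.card J.roots ≤ J.natDegree := J.card_roots'
        _ = k - 2 := hJdeg
        _ = (Finset.univ.image s).card := by
            rw [Finset.card_image_of_injective _ hs, Finset.card_univ, Fintype.card_fin]
        _ = Multiset.card (Finset.univ.image s).val := rfl
  have hlc : J.leadingCoeff ≠ 0 := leadingCoeff_ne_zero.2 hJne
  have hJeval : ∀ x : ℝ, J.eval x = J.leadingCoeff * ∏ i, (x - s i) := by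
    intro x
    have hcard : Multiset.card J.roots = J.natDegree := by
      rw [← hS, hJdeg]
      rw [show Multiset.card (Finset.univ.image s).val = (Finset.univ.image s).card from rfl,
        Finset.card_image_of_injective _ hs, Finset.card_univ, Fintype.card_fin]
    conv_lhs => rw [← C_leadingCoeff_mul_prod_multiset_X_sub_C hcard]
    rw [eval_mul, eval_C, eval_multiset_prod, ← hS, Multiset.map_map]
    congr 1
    simp only [Function.comp, eval_sub, eval_X, eval_C]
    rw [show (Multiset.map (fun z => x - z) (Finset.univ.image s).val).prod
        = (Finset.univ.image s).prod (fun z => x - z) from rfl]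
    rw [Finset.prod_image (fun i _ j _ hij => hs hij)]
  -- the multiset of all k Gauss-Lobatto points
  set Z : Multiset ℝ := a ::ₘ b ::ₘ (Finset.univ.image (fun i => T (s i))).val with hZ_def
  have hZnodup : Z.Nodup := by
    refine Multiset.nodup_cons.2 ⟨?_, Multiset.nodup_cons.2 ⟨?_, (Finset.univ.image _).nodup⟩⟩
    · simp only [Multiset.mem_cons, Finset.mem_val, Finset.mem_image]
      rintro (rfl | ⟨i, _, hi⟩)
      · exact absurd rfl (ne_of_lt hab)
      · exact absurd hi (ne_of_gt (hTmem i).1)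
    · simp only [Finset.mem_val, Finset.mem_image]
      rintro ⟨i, _, hi⟩
      exact absurd hi (ne_of_lt (hTmem i).2)
  have hZcard : Multiset.card Z = k := by
    rw [hZ_def]
    simp only [Multiset.card_cons]
    rw [show Multiset.card (Finset.univ.image (fun i => T (s i))).val
        = (Finset.univ.image (fun i => T (s i))).card from rfl,
      Finset.card_image_of_injective _ hTinj, Finset.card_univ, Fintype.card_fin]
    omega
  set q : Polynomial ℝ := (Z.map fun z => X - C z).prod with hq_def
  have hqmonic : q.Monic :=
    monic_multiset_prod_of_monic _ _ (fun z _ => monic_X_sub_C z)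
  have hqdeg : q.natDegree = k := by
    rw [hq_def, natDegree_multiset_prod_X_sub_C_eq_card, hZcard]
  have hqeval : ∀ t : ℝ, q.eval t = (t - a) * ((t - b) * ∏ i, (t - T (s i))) := by
    intro t
    rw [hq_def, eval_multiset_prod, Multiset.map_map]
    simp only [Function.comp, eval_sub, eval_X, eval_C]
    rw [hZ_def]
    simp only [Multiset.map_cons, Multiset.prod_cons]
    congr 1
    congr 1
    rw [show ((Finset.univ.image (fun i => T (s i))).val.map (fun z => t - z)).prod
        = (Finset.univ.image (fun i => T (s i))).prod (fun z => t - z) from rfl]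
    rw [Finset.prod_image (fun i _ j _ hij => hTinj hij)]
  -- the integral of q over [a,b] is zero by orthogonality
  have hqint : ∫ t in a..b, q.eval t = 0 := by
    have hsub : (h : ℝ) • ∫ x in (-1:ℝ)..1, q.eval (h * x + m)
        = ∫ t in a..b, q.eval t := by
      have := intervalIntegral.smul_integral_comp_mul_add (a := (-1:ℝ)) (b := 1)
        (fun t => q.eval t) h m
      rw [this, show h * (-1) + m = a by rw [hh_def, hm_def]; ring,
        show h * 1 + m = b by rw [hh_def, hm_def]; ring]
    rw [← hsub]
    have hinner : ∀ x : ℝ, q.eval (h * x + m)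
        = (-(h ^ k) / J.leadingCoeff) * ((1 - x) * (1 + x) * J.eval x *
          (1 : Polynomial ℝ).eval x) := by
      intro x
      rw [hqeval, hJeval]
      have e1 : h * x + m - a = h * (x + 1) := by rw [hh_def, hm_def]; ring
      have e2 : h * x + m - b = h * (x - 1) := by rw [hh_def, hm_def]; ring
      have e3 : ∀ i : Fin (k - 2), h * x + m - T (s i) = h * (x - s i) := by
        intro i; rw [hTx]; ring
      rw [e1, e2]
      rw [show (∏ i, (h * x + m - T (s i))) = ∏ i, (h * (x - s i)) from
        Finset.prod_congr rfl (fun i _ => e3 i)]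
      rw [Finset.prod_mul_distrib, Finset.prod_const, Finset.card_univ, Fintype.card_fin]
      rw [eval_one]
      field_simp
      rw [show h ^ k = h ^ 2 * h ^ (k - 2) by rw [← pow_add, show 2 + (k - 2) = k by omega]]
      ring
    rw [intervalIntegral.integral_congr (fun x _ => hinner x)]
    rw [intervalIntegral.integral_const_mul]
    rw [hJorth 1 (by rw [natDegree_one]; omega)]
    simp
  -- D is a constant multiple of q
  by_cases hD0 : D = 0
  · simp [hD0]
  have hZroots : Z ≤ D.roots := by
    rw [Multiset.le_iff_subset hZnodup]
    intro x hx
    rw [hZ_def] at hx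
    simp only [Multiset.mem_cons, Finset.mem_val, Finset.mem_image] at hx
    rcases hx with rfl | rfl | ⟨i, _, rfl⟩
    · exact (mem_roots hD0).2 hDa
    · exact (mem_roots hD0).2 hDb
    · exact (mem_roots hD0).2 (hDs i)
  have hqdvd : q ∣ D := (Multiset.prod_X_sub_C_dvd_iff_le_roots hD0 Z).2 hZroots
  obtain ⟨r, hr⟩ := hqdvd
  have hrne : r ≠ 0 := by
    rintro rfl
    rw [mul_zero] at hr
    exact hD0 hr
  have hrdeg : r.natDegree = 0 := by
    have := hqmonic.natDegree_mul' hrne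
    rw [← hr] at this
    omega
  obtain ⟨c, rfl⟩ := natDegree_eq_zero.1 hrdeg
  have : ∀ t, D.eval t = c * q.eval t := by
    intro t
    rw [hr, eval_mul, eval_C]; ring
  rw [intervalIntegral.integral_congr (fun t _ => this t),
    intervalIntegral.integral_const_mul, hqint, mul_zero]

/-- Endpoint matching of the interpolant `R u ∈ P_k(I_n;B)` defined by
`R u(t_{n-1}) = I u(t_{n-1})` and `(R u)'(t^GL) = (I u)'(t^GL)` at all `k` Gauss--Lobatto
points (endpoints `a, b` and affine images of the roots of the Jacobi polynomial of
degree `k-2` for the weight `(1-t)(1+t)`), where `I u ∈ P_{k+1}(I_n;B)` matches `u`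
and `u'` at both endpoints: then `R u(t_n) = u(t_n)` and `(R u)'` matches `u'` at both
endpoints. -/
theorem Rk_interpolant_endpoint_matching
    (B : Type*) [NormedAddCommGroup B] [NormedSpace ℝ B]
    (k : ℕ) (hk : 3 ≤ k) (a b : ℝ) (hab : a < b)
    (T : ℝ → ℝ) (hT : ∀ x, T x = (a + b) / 2 + (b - a) / 2 * x)
    (J : Polynomial ℝ) (hJdeg : J.natDegree = k - 2) (hJne : J ≠ 0)
    (hJorth : ∀ r : Polynomial ℝ, r.natDegree < k - 2 →
      ∫ t in (-1:ℝ)..1, (1 - t) * (1 + t) * J.eval t * r.eval t = 0)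
    (s : Fin (k - 2) → ℝ) (hs : Function.Injective s)
    (hsmem : ∀ i, s i ∈ Set.Ioo (-1:ℝ) 1) (hroot : ∀ i, J.eval (s i) = 0)
    (u ud : ℝ → B)
    (Iu : ℝ → B) (cI : Fin (k + 2) → B)
    (hIu : ∀ t, Iu t = ∑ i : Fin (k + 2), t ^ (i : ℕ) • cI i)
    (hIa : Iu a = u a) (hIb : Iu b = u b)
    (hIa' : deriv Iu a = ud a) (hIb' : deriv Iu b = ud b)
    (Ru : ℝ → B) (cR : Fin (k + 1) → B)
    (hRu : ∀ t, Ru t = ∑ i : Fin (k + 1), t ^ (i : ℕ) • cR i)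
    (hRa : Ru a = Iu a)
    (hGLa : deriv Ru a = deriv Iu a) (hGLb : deriv Ru b = deriv Iu b)
    (hGLint : ∀ i, deriv Ru (T (s i)) = deriv Iu (T (s i))) :
    Ru b = u b ∧ deriv Ru a = ud a ∧ deriv Ru b = ud b := by
  refine ⟨?_, hGLa.trans hIa', hGLb.trans hIb'⟩
  rw [← hIb]
  -- differentiability of Ru and Iu
  have hRudiff : Differentiable ℝ Ru := by
    rw [funext hRu]
    exact Differentiable.fun_sum fun i _ => (differentiable_pow (i : ℕ)).smul_const (cR i)
  have hIudiff : Differentiable ℝ Iu := by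
    rw [funext hIu]
    exact Differentiable.fun_sum fun i _ => (differentiable_pow (i : ℕ)).smul_const (cI i)
  rw [NormedSpace.eq_iff_forall_dual_eq ℝ]
  intro φ
  set P : Polynomial ℝ := ∑ i : Fin (k + 1), C (φ (cR i)) * X ^ (i : ℕ) with hP_def
  set Q : Polynomial ℝ := ∑ i : Fin (k + 2), C (φ (cI i)) * X ^ (i : ℕ) with hQ_def
  have hPeval : ∀ t, P.eval t = φ (Ru t) := by
    intro t
    rw [hRu, map_sum, hP_def, eval_finset_sum]
    exact Finset.sum_congr rfl fun i _ => by
      rw [eval_mul, eval_C, eval_pow, eval_X, map_smul]; simp [mul_comm]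
  have hQeval : ∀ t, Q.eval t = φ (Iu t) := by
    intro t
    rw [hIu, map_sum, hQ_def, eval_finset_sum]
    exact Finset.sum_congr rfl fun i _ => by
      rw [eval_mul, eval_C, eval_pow, eval_X, map_smul]; simp [mul_comm]
  have hPderiv : ∀ t, P.derivative.eval t = φ (deriv Ru t) := by
    intro t
    have h1 : HasDerivAt (fun t => φ (Ru t)) (φ (deriv Ru t)) t :=
      φ.hasFDerivAt.comp_hasDerivAt t (hRudiff t).hasDerivAt
    have h2 : HasDerivAt (fun t => φ (Ru t)) (P.derivative.eval t) t := by
      have := P.hasDerivAt t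
      simpa only [funext hPeval] using this
    exact h2.unique h1
  have hQderiv : ∀ t, Q.derivative.eval t = φ (deriv Iu t) := by
    intro t
    have h1 : HasDerivAt (fun t => φ (Iu t)) (φ (deriv Iu t)) t :=
      φ.hasFDerivAt.comp_hasDerivAt t (hIudiff t).hasDerivAt
    have h2 : HasDerivAt (fun t => φ (Iu t)) (Q.derivative.eval t) t := by
      have := Q.hasDerivAt t
      simpa only [funext hQeval] using this
    exact h2.unique h1
  set D : Polynomial ℝ := Q.derivative - P.derivative with hD_def
  have hDdeg : D.natDegree ≤ k := by
    have hQd : Q.natDegree ≤ k + 1 := by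
      refine natDegree_sum_le_of_forall_le _ _ fun i _ => ?_
      exact (natDegree_C_mul_X_pow_le _ _).trans (by omega)
    have hPd : P.natDegree ≤ k := by
      refine natDegree_sum_le_of_forall_le _ _ fun i _ => ?_
      exact (natDegree_C_mul_X_pow_le _ _).trans (by omega)
    refine (natDegree_sub_le _ _).trans (max_le ?_ ?_)
    · exact (natDegree_derivative_le Q).trans (by omega)
    · exact (natDegree_derivative_le P).trans (by omega)
  have hDa : D.eval a = 0 := by
    rw [hD_def, eval_sub, hQderiv, hPderiv, hGLa, sub_self]
  have hDb : D.eval b = 0 := by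
    rw [hD_def, eval_sub, hQderiv, hPderiv, hGLb, sub_self]
  have hDs : ∀ i, D.eval (T (s i)) = 0 := by
    intro i
    rw [hD_def, eval_sub, hQderiv, hPderiv, hGLint i, sub_self]
  have hint : ∫ t in a..b, D.eval t = 0 :=
    key_integral_zero k hk a b hab T hT J hJdeg hJne hJorth s hs hsmem hroot
      D hDdeg hDa hDb hDs
  -- fundamental theorem of calculus for P and Q
  have hPint : ∫ t in a..b, P.derivative.eval t = P.eval b - P.eval a := by
    refine intervalIntegral.integral_deriv_eq_sub' _ (funext fun t => P.deriv)
      (fun t _ => P.differentiableAt) ?_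
    exact (P.derivative.continuous_aeval).continuousOn
  have hQint : ∫ t in a..b, Q.derivative.eval t = Q.eval b - Q.eval a := by
    refine intervalIntegral.integral_deriv_eq_sub' _ (funext fun t => Q.deriv)
      (fun t _ => Q.differentiableAt) ?_
    exact (Q.derivative.continuous_aeval).continuousOn
  have hintegrable : ∀ R : Polynomial ℝ, IntervalIntegrable (fun t => R.eval t)
      MeasureTheory.volume a b :=
    fun R => (R.continuous_aeval).intervalIntegrable _ _
  have hsplit : ∫ t in a..b, D.eval t
      = (∫ t in a..b, Q.derivative.eval t) - ∫ t in a..b, P.derivative.eval t := by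
    rw [hD_def]
    rw [show (fun t => (Q.derivative - P.derivative).eval t)
        = fun t => Q.derivative.eval t - P.derivative.eval t from funext fun t => by
      rw [eval_sub]]
    exact intervalIntegral.integral_sub (hintegrable _) (hintegrable _)
  rw [hsplit, hPint, hQint] at hint
  have hPa : P.eval a = Q.eval a := by rw [hPeval, hQeval, hRa]
  have : Q.eval b = P.eval b := by linarith [hint, hPa]
  rw [← hPeval, ← hQeval, this]
end
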